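/- In the algebra A = U(g) ⊗_ℂ C(p), the following three commutator identities hold: (i) D·(1 ⊗ e3·f4) − (1 ⊗ e3·f4)·D = −2·(E3 ⊗ f4 − F4 ⊗ e3); (ii) D·(1 ⊗ e4·f3) − (1 ⊗ e4·f3)·D = −2·(E4 ⊗ f3 − F3 ⊗ e4); (iii) D·(1 ⊗ (e3·f3 − e4·f4)) − (1 ⊗ (e3·f3 − e4·f4))·D = −2·D + 4·(E4 ⊗ f4 + F3 ⊗ e3). -/

import Mathlib

noncomputable section

open Matrix Complex

attribute [local instance 100] LieRing.ofAssociativeRing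

/-- The space of 5×5 complex matrices. -/
abbrev M5 := Matrix (Fin 5) (Fin 5) ℂ

/-- `e i j` : the matrix with `(i,j)` entry `1` and all other entries `0` (the 1-based indices
`e_{ij}` of the paper become 0-based here, so e.g. `e12` is `e 0 1`). -/
def e (i j : Fin 5) : M5 := Matrix.single i j 1

def H1 : M5 := I • e 0 1 - I • e 1 0
def H2 : M5 := I • e 2 3 - I • e 3 2
def E1 : M5 := (1/2 : ℂ) • (e 0 2 - e 1 3 - I • e 1 2 - I • e 0 3 - e 2 0 + e 3 1 + I • e 2 1 + I • e 3 0)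
def E2 : M5 := (1/2 : ℂ) • (e 0 2 + e 1 3 - I • e 1 2 + I • e 0 3 - e 2 0 - e 3 1 + I • e 2 1 - I • e 3 0)
def F1 : M5 := (-1/2 : ℂ) • (e 0 2 - e 1 3 + I • e 1 2 + I • e 0 3 - e 2 0 + e 3 1 - I • e 2 1 - I • e 3 0)
def F2 : M5 := (-1/2 : ℂ) • (e 0 2 + e 1 3 + I • e 1 2 - I • e 0 3 - e 2 0 - e 3 1 - I • e 2 1 + I • e 3 0)
def E3 : M5 := e 0 4 - I • e 1 4 + e 4 0 - I • e 4 1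
def E4 : M5 := e 2 4 - I • e 3 4 + e 4 2 - I • e 4 3
def F3 : M5 := e 0 4 + I • e 1 4 + e 4 0 + I • e 4 1
def F4 : M5 := e 2 4 + I • e 3 4 + e 4 2 + I • e 4 3
/-- The matrix `J = diag(1,1,1,1,−1)`. -/
def Jmat : M5 := Matrix.diagonal ![1, 1, 1, 1, -1]

/-- The complexification `g` of `so(4,1)`, realized as the Lie algebra of all `X ∈ M₅(ℂ)`
with `Xᵀ * J + J * X = 0`, a Lie subalgebra of `M₅(ℂ)` with the commutator bracket. -/
def gLie : LieSubalgebra ℂ M5 where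
  carrier := {X | Xᵀ * Jmat + Jmat * X = 0}
  add_mem' := by
    intro X Y hX hY
    simp only [Set.mem_setOf_eq] at *
    rw [Matrix.transpose_add, Matrix.add_mul, Matrix.mul_add]
    calc Xᵀ * Jmat + Yᵀ * Jmat + (Jmat * X + Jmat * Y)
        = Xᵀ * Jmat + Jmat * X + (Yᵀ * Jmat + Jmat * Y) := by abel
      _ = 0 := by rw [hX, hY, add_zero]
  zero_mem' := by simp
  smul_mem' := by
    intro c X hX
    simp only [Set.mem_setOf_eq] at *
    rw [Matrix.transpose_smul, Matrix.smul_mul, Matrix.mul_smul, ← smul_add, hX, smul_zero]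
  lie_mem' := by
    intro X Y hX hY
    simp only [Set.mem_setOf_eq] at *
    have hX' : Xᵀ * Jmat = -(Jmat * X) := eq_neg_of_add_eq_zero_left hX
    have hY' : Yᵀ * Jmat = -(Jmat * Y) := eq_neg_of_add_eq_zero_left hY
    have h : (⁅X, Y⁆)ᵀ * Jmat = -(Jmat * ⁅X, Y⁆) := by
      rw [Ring.lie_def, Matrix.transpose_sub, Matrix.transpose_mul, Matrix.transpose_mul,
        Matrix.sub_mul, Matrix.mul_assoc Yᵀ, Matrix.mul_assoc Xᵀ, hX', hY',
        Matrix.mul_neg, Matrix.mul_neg, ← Matrix.mul_assoc, ← Matrix.mul_assoc, hX', hY',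
        Matrix.neg_mul, Matrix.neg_mul, neg_neg, neg_neg, Matrix.mul_sub, neg_sub,
        Matrix.mul_assoc, Matrix.mul_assoc]
    show (⁅X, Y⁆)ᵀ * Jmat + Jmat * ⁅X, Y⁆ = 0
    rw [h, neg_add_cancel]

theorem mem_gLie_iff (X : M5) :
    X ∈ gLie ↔ ∀ i j, X j i * ![1, 1, 1, 1, -1] j + ![1, 1, 1, 1, -1] i * X i j = 0 := by
  constructor
  · intro h i j
    have h' : Xᵀ * Jmat + Jmat * X = 0 := h
    have := congrFun (congrFun h' i) j
    simpa [Jmat, Matrix.mul_diagonal, Matrix.diagonal_mul] using this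
  · intro h
    show Xᵀ * Jmat + Jmat * X = 0
    ext i j
    simpa [Jmat, Matrix.mul_diagonal, Matrix.diagonal_mul] using h i j

set_option maxHeartbeats 1000000 in
theorem E3_mem : E3 ∈ gLie := by
  rw [mem_gLie_iff]
  intro i j
  fin_cases i <;> fin_cases j <;>
    simp [E3, e, Matrix.single, Matrix.smul_apply, Matrix.sub_apply, Matrix.add_apply]

set_option maxHeartbeats 1000000 in
theorem E4_mem : E4 ∈ gLie := by
  rw [mem_gLie_iff]
  intro i j
  fin_cases i <;> fin_cases j <;>
    simp [E4, e, Matrix.single, Matrix.smul_apply, Matrix.sub_apply, Matrix.add_apply]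

set_option maxHeartbeats 1000000 in
theorem F3_mem : F3 ∈ gLie := by
  rw [mem_gLie_iff]
  intro i j
  fin_cases i <;> fin_cases j <;>
    simp [F3, e, Matrix.single, Matrix.smul_apply, Matrix.sub_apply, Matrix.add_apply]

set_option maxHeartbeats 1000000 in
theorem F4_mem : F4 ∈ gLie := by
  rw [mem_gLie_iff]
  intro i j
  fin_cases i <;> fin_cases j <;>
    simp [F4, e, Matrix.single, Matrix.smul_apply, Matrix.sub_apply, Matrix.add_apply]

/-- The universal enveloping algebra `U(g)`. -/
abbrev Ug := UniversalEnvelopingAlgebra ℂ gLie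

/-- The image of `E3` in `U(g)`. -/
def uE3 : Ug := UniversalEnvelopingAlgebra.ι ℂ (⟨E3, E3_mem⟩ : gLie)

/-- The image of `E4` in `U(g)`. -/
def uE4 : Ug := UniversalEnvelopingAlgebra.ι ℂ (⟨E4, E4_mem⟩ : gLie)

/-- The image of `F3` in `U(g)`. -/
def uF3 : Ug := UniversalEnvelopingAlgebra.ι ℂ (⟨F3, F3_mem⟩ : gLie)

/-- The image of `F4` in `U(g)`. -/
def uF4 : Ug := UniversalEnvelopingAlgebra.ι ℂ (⟨F4, F4_mem⟩ : gLie)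


/-- A 4-dimensional complex vector space with basis `(e3, e4, f3, f4)` (modelled on `Fin 4 → ℂ`,
with `e3, e4, f3, f4` the standard basis vectors, in this order). -/
abbrev Vp := Fin 4 → ℂ

def pe3 : Vp := Pi.single 0 1
def pe4 : Vp := Pi.single 1 1
def pf3 : Vp := Pi.single 2 1
def pf4 : Vp := Pi.single 3 1

/-- The symmetric bilinear form `B` on `p` with `B(e3,f3) = B(f3,e3) = B(e4,f4) = B(f4,e4) = 1`
and `B = 0` on all other pairs of basis vectors. -/
def Bform : LinearMap.BilinForm ℂ Vp :=
  LinearMap.mk₂ ℂ (fun v w => v 0 * w 2 + v 2 * w 0 + v 1 * w 3 + v 3 * w 1)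
    (by intros; simp only [Pi.add_apply]; ring)
    (by intros; simp only [Pi.smul_apply, smul_eq_mul]; ring)
    (by intros; simp only [Pi.add_apply]; ring)
    (by intros; simp only [Pi.smul_apply, smul_eq_mul]; ring)

/-- The quadratic form `Q(v) = −B(v,v)`. -/
def Qp : QuadraticForm ℂ Vp := LinearMap.BilinMap.toQuadraticMap (-Bform)

/-- The Clifford algebra `C(p)` of the quadratic form `Q`, in which
`v * w + w * v = −2·B(v,w)` for all `v, w ∈ p`. -/
abbrev Cp := CliffordAlgebra Qp

def ce3 : Cp := CliffordAlgebra.ι Qp pe3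
def ce4 : Cp := CliffordAlgebra.ι Qp pe4
def cf3 : Cp := CliffordAlgebra.ι Qp pf3
def cf4 : Cp := CliffordAlgebra.ι Qp pf4
open scoped TensorProduct

set_option synthInstance.maxHeartbeats 400000
set_option maxHeartbeats 1000000

/-- The algebra `A = U(g) ⊗ C(p)`. -/
abbrev Atens := Ug ⊗[ℂ] Cp

/-- The Dirac operator `D = E3⊗f3 + E4⊗f4 + F3⊗e3 + F4⊗e4 ∈ U(g) ⊗ C(p)`. -/
def Dop : Atens := uE3 ⊗ₜ[ℂ] cf3 + uE4 ⊗ₜ[ℂ] cf4 + uF3 ⊗ₜ[ℂ] ce3 + uF4 ⊗ₜ[ℂ] ce4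

lemma Qp_apply (v : Vp) : Qp v = -(v 0 * v 2 + v 2 * v 0 + v 1 * v 3 + v 3 * v 1) := by
  simp [Qp, Bform, LinearMap.BilinMap.toQuadraticMap_apply]

lemma sq_e3 : ce3 * ce3 = 0 := by
  rw [ce3, CliffordAlgebra.ι_sq_scalar]; simp [Qp_apply, pe3, Pi.single_apply]
lemma sq_e4 : ce4 * ce4 = 0 := by
  rw [ce4, CliffordAlgebra.ι_sq_scalar]; simp [Qp_apply, pe4, Pi.single_apply]
lemma sq_f3 : cf3 * cf3 = 0 := by
  rw [cf3, CliffordAlgebra.ι_sq_scalar]; simp [Qp_apply, pf3, Pi.single_apply]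
lemma sq_f4 : cf4 * cf4 = 0 := by
  rw [cf4, CliffordAlgebra.ι_sq_scalar]; simp [Qp_apply, pf4, Pi.single_apply]

lemma swap_gen (a b : Vp) :
    CliffordAlgebra.ι Qp b * CliffordAlgebra.ι Qp a
      = algebraMap ℂ Cp (QuadraticMap.polar Qp a b)
        - CliffordAlgebra.ι Qp a * CliffordAlgebra.ι Qp b := by
  have := CliffordAlgebra.ι_mul_ι_add_swap (Q := Qp) a b
  rw [← this]; abel

lemma polar_apply (a b : Vp) : QuadraticMap.polar Qp a b
    = -(a 0 * b 2 + a 2 * b 0 + a 1 * b 3 + a 3 * b 1)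
      - (a 2 * b 0 + a 0 * b 2 + a 3 * b 1 + a 1 * b 3) := by
  simp [QuadraticMap.polar, Qp_apply, Pi.add_apply]; ring

lemma swap_gen' (a b : Vp) :
    CliffordAlgebra.ι Qp b * CliffordAlgebra.ι Qp a
      = algebraMap ℂ Cp (-(a 0 * b 2 + a 2 * b 0 + a 1 * b 3 + a 3 * b 1)
          - (a 2 * b 0 + a 0 * b 2 + a 3 * b 1 + a 1 * b 3))
        - CliffordAlgebra.ι Qp a * CliffordAlgebra.ι Qp b := by
  rw [swap_gen, polar_apply]

lemma pe3_vals : pe3 0 = 1 ∧ pe3 1 = 0 ∧ pe3 2 = 0 ∧ pe3 3 = 0 := by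
  refine ⟨rfl, ?_, ?_, ?_⟩ <;> simp [pe3, Pi.single_apply]
lemma pe4_vals : pe4 0 = 0 ∧ pe4 1 = 1 ∧ pe4 2 = 0 ∧ pe4 3 = 0 := by
  refine ⟨?_, rfl, ?_, ?_⟩ <;> simp [pe4, Pi.single_apply]
lemma pf3_vals : pf3 0 = 0 ∧ pf3 1 = 0 ∧ pf3 2 = 1 ∧ pf3 3 = 0 := by
  refine ⟨?_, ?_, rfl, ?_⟩ <;> simp [pf3, Pi.single_apply]
lemma pf4_vals : pf4 0 = 0 ∧ pf4 1 = 0 ∧ pf4 2 = 0 ∧ pf4 3 = 1 := by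
  refine ⟨?_, ?_, ?_, rfl⟩ <;> simp [pf4, Pi.single_apply]

lemma alg2 : algebraMap ℂ Cp 2 = 2 := map_ofNat _ 2
lemma algneg2 : algebraMap ℂ Cp (-2) = -2 := by rw [map_neg, alg2]

lemma swap_e4e3 : ce4 * ce3 = -(ce3 * ce4) := by
  rw [ce3, ce4, swap_gen', pe3_vals.1, pe3_vals.2.1, pe3_vals.2.2.1, pe3_vals.2.2.2,
    pe4_vals.1, pe4_vals.2.1, pe4_vals.2.2.1, pe4_vals.2.2.2]
  norm_num
lemma swap_f3e3 : cf3 * ce3 = (-2 : Cp) - ce3 * cf3 := by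
  rw [ce3, cf3, swap_gen', pe3_vals.1, pe3_vals.2.1, pe3_vals.2.2.1, pe3_vals.2.2.2,
    pf3_vals.1, pf3_vals.2.1, pf3_vals.2.2.1, pf3_vals.2.2.2]
  norm_num [algneg2]
lemma swap_f3e4 : cf3 * ce4 = -(ce4 * cf3) := by
  rw [ce4, cf3, swap_gen', pe4_vals.1, pe4_vals.2.1, pe4_vals.2.2.1, pe4_vals.2.2.2,
    pf3_vals.1, pf3_vals.2.1, pf3_vals.2.2.1, pf3_vals.2.2.2]
  norm_num
lemma swap_f4e3 : cf4 * ce3 = -(ce3 * cf4) := by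
  rw [ce3, cf4, swap_gen', pe3_vals.1, pe3_vals.2.1, pe3_vals.2.2.1, pe3_vals.2.2.2,
    pf4_vals.1, pf4_vals.2.1, pf4_vals.2.2.1, pf4_vals.2.2.2]
  norm_num
lemma swap_f4e4 : cf4 * ce4 = (-2 : Cp) - ce4 * cf4 := by
  rw [ce4, cf4, swap_gen', pe4_vals.1, pe4_vals.2.1, pe4_vals.2.2.1, pe4_vals.2.2.2,
    pf4_vals.1, pf4_vals.2.1, pf4_vals.2.2.1, pf4_vals.2.2.2]
  norm_num [algneg2]
lemma swap_f4f3 : cf4 * cf3 = -(cf3 * cf4) := by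
  rw [cf3, cf4, swap_gen', pf3_vals.1, pf3_vals.2.1, pf3_vals.2.2.1, pf3_vals.2.2.2,
    pf4_vals.1, pf4_vals.2.1, pf4_vals.2.2.1, pf4_vals.2.2.2]
  norm_num

-- trailing-variable variants, for simp-based normalization
lemma swap_gen_x {a b c : Cp} (h : b * a = c - a * b) (x : Cp) :
    b * (a * x) = c * x - a * (b * x) := by
  rw [← mul_assoc, h, sub_mul, mul_assoc]
lemma swap_gen_neg_x {a b : Cp} (h : b * a = -(a * b)) (x : Cp) :
    b * (a * x) = -(a * (b * x)) := by
  rw [← mul_assoc, h, neg_mul, mul_assoc]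
lemma sq_x {a : Cp} (h : a * a = 0) (x : Cp) : a * (a * x) = 0 := by
  rw [← mul_assoc, h, zero_mul]

lemma swap_e4e3_x : ∀ x, ce4 * (ce3 * x) = -(ce3 * (ce4 * x)) := swap_gen_neg_x swap_e4e3
lemma swap_f3e3_x : ∀ x, cf3 * (ce3 * x) = (-2 : Cp) * x - ce3 * (cf3 * x) :=
  swap_gen_x swap_f3e3
lemma swap_f3e4_x : ∀ x, cf3 * (ce4 * x) = -(ce4 * (cf3 * x)) := swap_gen_neg_x swap_f3e4
lemma swap_f4e3_x : ∀ x, cf4 * (ce3 * x) = -(ce3 * (cf4 * x)) := swap_gen_neg_x swap_f4e3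
lemma swap_f4e4_x : ∀ x, cf4 * (ce4 * x) = (-2 : Cp) * x - ce4 * (cf4 * x) :=
  swap_gen_x swap_f4e4
lemma swap_f4f3_x : ∀ x, cf4 * (cf3 * x) = -(cf3 * (cf4 * x)) := swap_gen_neg_x swap_f4f3
lemma sq_e3_x : ∀ x, ce3 * (ce3 * x) = 0 := sq_x sq_e3
lemma sq_e4_x : ∀ x, ce4 * (ce4 * x) = 0 := sq_x sq_e4
lemma sq_f3_x : ∀ x, cf3 * (cf3 * x) = 0 := sq_x sq_f3
lemma sq_f4_x : ∀ x, cf4 * (cf4 * x) = 0 := sq_x sq_f4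

lemma smul_neg2 (x : Cp) : (-2 : ℂ) • x = (-2 : Cp) * x := by
  rw [Algebra.smul_def, algneg2]
lemma smul_two (x : Cp) : (2 : ℂ) • x = (2 : Cp) * x := by
  rw [Algebra.smul_def, alg2]


lemma key (c r3 r4 s3 s4 : Cp)
    (h1 : cf3 * c - c * cf3 = r3) (h2 : cf4 * c - c * cf4 = r4)
    (h3 : ce3 * c - c * ce3 = s3) (h4 : ce4 * c - c * ce4 = s4) :
    Dop * ((1 : Ug) ⊗ₜ[ℂ] c) - ((1 : Ug) ⊗ₜ[ℂ] c) * Dop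
      = uE3 ⊗ₜ[ℂ] r3 + uE4 ⊗ₜ[ℂ] r4 + uF3 ⊗ₜ[ℂ] s3 + uF4 ⊗ₜ[ℂ] s4 := by
  subst h1 h2 h3 h4
  simp only [Dop, add_mul, mul_add, Algebra.TensorProduct.tmul_mul_tmul, one_mul, mul_one,
    TensorProduct.tmul_sub]
  abel

lemma comm1a : cf3 * (ce3 * cf4) - (ce3 * cf4) * cf3 = (-2 : ℂ) • cf4 := by
  simp only [smul_neg2, smul_two, mul_sub, sub_mul, mul_neg, neg_mul, mul_assoc]
  simp only [swap_e4e3, swap_f3e3, swap_f3e4, swap_f4e3, swap_f4e4, swap_f4f3,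
    sq_e3, sq_e4, sq_f3, sq_f4,
    swap_e4e3_x, swap_f3e3_x, swap_f3e4_x, swap_f4e3_x, swap_f4e4_x, swap_f4f3_x,
    sq_e3_x, sq_e4_x, sq_f3_x, sq_f4_x,
    mul_sub, sub_mul, mul_neg, neg_mul, mul_zero, zero_mul, neg_neg, neg_zero, sub_zero, zero_sub,
    mul_assoc]
  try noncomm_ring
lemma comm1b : cf4 * (ce3 * cf4) - (ce3 * cf4) * cf4 = 0 := by
  simp only [smul_neg2, smul_two, mul_sub, sub_mul, mul_neg, neg_mul, mul_assoc]
  simp only [swap_e4e3, swap_f3e3, swap_f3e4, swap_f4e3, swap_f4e4, swap_f4f3,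
    sq_e3, sq_e4, sq_f3, sq_f4,
    swap_e4e3_x, swap_f3e3_x, swap_f3e4_x, swap_f4e3_x, swap_f4e4_x, swap_f4f3_x,
    sq_e3_x, sq_e4_x, sq_f3_x, sq_f4_x,
    mul_sub, sub_mul, mul_neg, neg_mul, mul_zero, zero_mul, neg_neg, neg_zero, sub_zero, zero_sub,
    mul_assoc]
  try noncomm_ring
lemma comm1c : ce3 * (ce3 * cf4) - (ce3 * cf4) * ce3 = 0 := by
  simp only [smul_neg2, smul_two, mul_sub, sub_mul, mul_neg, neg_mul, mul_assoc]
  simp only [swap_e4e3, swap_f3e3, swap_f3e4, swap_f4e3, swap_f4e4, swap_f4f3,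
    sq_e3, sq_e4, sq_f3, sq_f4,
    swap_e4e3_x, swap_f3e3_x, swap_f3e4_x, swap_f4e3_x, swap_f4e4_x, swap_f4f3_x,
    sq_e3_x, sq_e4_x, sq_f3_x, sq_f4_x,
    mul_sub, sub_mul, mul_neg, neg_mul, mul_zero, zero_mul, neg_neg, neg_zero, sub_zero, zero_sub,
    mul_assoc]
  try noncomm_ring
lemma comm1d : ce4 * (ce3 * cf4) - (ce3 * cf4) * ce4 = (2 : ℂ) • ce3 := by
  simp only [smul_neg2, smul_two, mul_sub, sub_mul, mul_neg, neg_mul, mul_assoc]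
  simp only [swap_e4e3, swap_f3e3, swap_f3e4, swap_f4e3, swap_f4e4, swap_f4f3,
    sq_e3, sq_e4, sq_f3, sq_f4,
    swap_e4e3_x, swap_f3e3_x, swap_f3e4_x, swap_f4e3_x, swap_f4e4_x, swap_f4f3_x,
    sq_e3_x, sq_e4_x, sq_f3_x, sq_f4_x,
    mul_sub, sub_mul, mul_neg, neg_mul, mul_zero, zero_mul, neg_neg, neg_zero, sub_zero, zero_sub,
    mul_assoc]
  try noncomm_ring
lemma comm2a : cf3 * (ce4 * cf3) - (ce4 * cf3) * cf3 = 0 := by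
  simp only [smul_neg2, smul_two, mul_sub, sub_mul, mul_neg, neg_mul, mul_assoc]
  simp only [swap_e4e3, swap_f3e3, swap_f3e4, swap_f4e3, swap_f4e4, swap_f4f3,
    sq_e3, sq_e4, sq_f3, sq_f4,
    swap_e4e3_x, swap_f3e3_x, swap_f3e4_x, swap_f4e3_x, swap_f4e4_x, swap_f4f3_x,
    sq_e3_x, sq_e4_x, sq_f3_x, sq_f4_x,
    mul_sub, sub_mul, mul_neg, neg_mul, mul_zero, zero_mul, neg_neg, neg_zero, sub_zero, zero_sub,
    mul_assoc]
  try noncomm_ring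
lemma comm2b : cf4 * (ce4 * cf3) - (ce4 * cf3) * cf4 = (-2 : ℂ) • cf3 := by
  simp only [smul_neg2, smul_two, mul_sub, sub_mul, mul_neg, neg_mul, mul_assoc]
  simp only [swap_e4e3, swap_f3e3, swap_f3e4, swap_f4e3, swap_f4e4, swap_f4f3,
    sq_e3, sq_e4, sq_f3, sq_f4,
    swap_e4e3_x, swap_f3e3_x, swap_f3e4_x, swap_f4e3_x, swap_f4e4_x, swap_f4f3_x,
    sq_e3_x, sq_e4_x, sq_f3_x, sq_f4_x,
    mul_sub, sub_mul, mul_neg, neg_mul, mul_zero, zero_mul, neg_neg, neg_zero, sub_zero, zero_sub,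
    mul_assoc]
  try noncomm_ring
lemma comm2c : ce3 * (ce4 * cf3) - (ce4 * cf3) * ce3 = (2 : ℂ) • ce4 := by
  simp only [smul_neg2, smul_two, mul_sub, sub_mul, mul_neg, neg_mul, mul_assoc]
  simp only [swap_e4e3, swap_f3e3, swap_f3e4, swap_f4e3, swap_f4e4, swap_f4f3,
    sq_e3, sq_e4, sq_f3, sq_f4,
    swap_e4e3_x, swap_f3e3_x, swap_f3e4_x, swap_f4e3_x, swap_f4e4_x, swap_f4f3_x,
    sq_e3_x, sq_e4_x, sq_f3_x, sq_f4_x,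
    mul_sub, sub_mul, mul_neg, neg_mul, mul_zero, zero_mul, neg_neg, neg_zero, sub_zero, zero_sub,
    mul_assoc]
  try noncomm_ring
lemma comm2d : ce4 * (ce4 * cf3) - (ce4 * cf3) * ce4 = 0 := by
  simp only [smul_neg2, smul_two, mul_sub, sub_mul, mul_neg, neg_mul, mul_assoc]
  simp only [swap_e4e3, swap_f3e3, swap_f3e4, swap_f4e3, swap_f4e4, swap_f4f3,
    sq_e3, sq_e4, sq_f3, sq_f4,
    swap_e4e3_x, swap_f3e3_x, swap_f3e4_x, swap_f4e3_x, swap_f4e4_x, swap_f4f3_x,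
    sq_e3_x, sq_e4_x, sq_f3_x, sq_f4_x,
    mul_sub, sub_mul, mul_neg, neg_mul, mul_zero, zero_mul, neg_neg, neg_zero, sub_zero, zero_sub,
    mul_assoc]
  try noncomm_ring
lemma comm3a : cf3 * (ce3 * cf3 - ce4 * cf4) - (ce3 * cf3 - ce4 * cf4) * cf3
    = (-2 : ℂ) • cf3 := by
  simp only [smul_neg2, smul_two, mul_sub, sub_mul, mul_neg, neg_mul, mul_assoc]
  simp only [swap_e4e3, swap_f3e3, swap_f3e4, swap_f4e3, swap_f4e4, swap_f4f3,
    sq_e3, sq_e4, sq_f3, sq_f4,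
    swap_e4e3_x, swap_f3e3_x, swap_f3e4_x, swap_f4e3_x, swap_f4e4_x, swap_f4f3_x,
    sq_e3_x, sq_e4_x, sq_f3_x, sq_f4_x,
    mul_sub, sub_mul, mul_neg, neg_mul, mul_zero, zero_mul, neg_neg, neg_zero, sub_zero, zero_sub,
    mul_assoc]
  try noncomm_ring
lemma comm3b : cf4 * (ce3 * cf3 - ce4 * cf4) - (ce3 * cf3 - ce4 * cf4) * cf4
    = (2 : ℂ) • cf4 := by
  simp only [smul_neg2, smul_two, mul_sub, sub_mul, mul_neg, neg_mul, mul_assoc]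
  simp only [swap_e4e3, swap_f3e3, swap_f3e4, swap_f4e3, swap_f4e4, swap_f4f3,
    sq_e3, sq_e4, sq_f3, sq_f4,
    swap_e4e3_x, swap_f3e3_x, swap_f3e4_x, swap_f4e3_x, swap_f4e4_x, swap_f4f3_x,
    sq_e3_x, sq_e4_x, sq_f3_x, sq_f4_x,
    mul_sub, sub_mul, mul_neg, neg_mul, mul_zero, zero_mul, neg_neg, neg_zero, sub_zero, zero_sub,
    mul_assoc]
  try noncomm_ring
lemma comm3c : ce3 * (ce3 * cf3 - ce4 * cf4) - (ce3 * cf3 - ce4 * cf4) * ce3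
    = (2 : ℂ) • ce3 := by
  simp only [smul_neg2, smul_two, mul_sub, sub_mul, mul_neg, neg_mul, mul_assoc]
  simp only [swap_e4e3, swap_f3e3, swap_f3e4, swap_f4e3, swap_f4e4, swap_f4f3,
    sq_e3, sq_e4, sq_f3, sq_f4,
    swap_e4e3_x, swap_f3e3_x, swap_f3e4_x, swap_f4e3_x, swap_f4e4_x, swap_f4f3_x,
    sq_e3_x, sq_e4_x, sq_f3_x, sq_f4_x,
    mul_sub, sub_mul, mul_neg, neg_mul, mul_zero, zero_mul, neg_neg, neg_zero, sub_zero, zero_sub,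
    mul_assoc]
  try noncomm_ring
lemma comm3d : ce4 * (ce3 * cf3 - ce4 * cf4) - (ce3 * cf3 - ce4 * cf4) * ce4
    = (-2 : ℂ) • ce4 := by
  simp only [smul_neg2, smul_two, mul_sub, sub_mul, mul_neg, neg_mul, mul_assoc]
  simp only [swap_e4e3, swap_f3e3, swap_f3e4, swap_f4e3, swap_f4e4, swap_f4f3,
    sq_e3, sq_e4, sq_f3, sq_f4,
    swap_e4e3_x, swap_f3e3_x, swap_f3e4_x, swap_f4e3_x, swap_f4e4_x, swap_f4f3_x,
    sq_e3_x, sq_e4_x, sq_f3_x, sq_f4_x,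
    mul_sub, sub_mul, mul_neg, neg_mul, mul_zero, zero_mul, neg_neg, neg_zero, sub_zero, zero_sub,
    mul_assoc]
  try noncomm_ring

/-- In `A = U(g) ⊗ C(p)`:
(i) `D·(1 ⊗ e3f4) − (1 ⊗ e3f4)·D = −2(E3 ⊗ f4 − F4 ⊗ e3)`;
(ii) `D·(1 ⊗ e4f3) − (1 ⊗ e4f3)·D = −2(E4 ⊗ f3 − F3 ⊗ e4)`;
(iii) `D·(1 ⊗ (e3f3 − e4f4)) − (1 ⊗ (e3f3 − e4f4))·D = −2D + 4(E4 ⊗ f4 + F3 ⊗ e3)`. -/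
theorem stmt_4 :
    (Dop * ((1 : Ug) ⊗ₜ[ℂ] (ce3 * cf4)) - ((1 : Ug) ⊗ₜ[ℂ] (ce3 * cf4)) * Dop
        = (-2 : ℂ) • (uE3 ⊗ₜ[ℂ] cf4 - uF4 ⊗ₜ[ℂ] ce3)) ∧
    (Dop * ((1 : Ug) ⊗ₜ[ℂ] (ce4 * cf3)) - ((1 : Ug) ⊗ₜ[ℂ] (ce4 * cf3)) * Dop
        = (-2 : ℂ) • (uE4 ⊗ₜ[ℂ] cf3 - uF3 ⊗ₜ[ℂ] ce4)) ∧
    (Dop * ((1 : Ug) ⊗ₜ[ℂ] (ce3 * cf3 - ce4 * cf4))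
        - ((1 : Ug) ⊗ₜ[ℂ] (ce3 * cf3 - ce4 * cf4)) * Dop
        = (-2 : ℂ) • Dop + (4 : ℂ) • (uE4 ⊗ₜ[ℂ] cf4 + uF3 ⊗ₜ[ℂ] ce3)) := by
  refine ⟨?_, ?_, ?_⟩
  · rw [key _ _ _ _ _ comm1a comm1b comm1c comm1d]
    simp only [TensorProduct.tmul_zero, TensorProduct.tmul_smul]
    module
  · rw [key _ _ _ _ _ comm2a comm2b comm2c comm2d]
    simp only [TensorProduct.tmul_zero, TensorProduct.tmul_smul]
    module
  · rw [key _ _ _ _ _ comm3a comm3b comm3c comm3d]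
    simp only [TensorProduct.tmul_zero, TensorProduct.tmul_smul, Dop]
    module
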